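/- Let q ≥ 2 be an integer, x irrational, 𝒪 the closure of the T_q-orbit of x in ℝ/ℤ, and 𝒪' = ⋂_{i≥0} T_q^i 𝒪 its attractor. Then the restriction of T_q to 𝒪' is not injective. -/

import Mathlib

open Metric Set


lemma unit_rep (z : UnitAddCircle) :
    ∃ t : ℝ, (t : UnitAddCircle) = z ∧ ‖z‖ = |t| ∧ |t| ≤ 1/2 := by
  obtain ⟨s, rfl⟩ := QuotientAddGroup.mk_surjective z
  refine ⟨s - round s, ?_, ?_, abs_sub_round s⟩
  · have h0 : ((round s : ℝ) : UnitAddCircle) = 0 := by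
      rw [AddCircle.coe_eq_zero_iff]; exact ⟨round s, by simp⟩
    push_cast
    rw [sub_eq_add_neg, QuotientAddGroup.mk_add]
    simp only [QuotientAddGroup.mk_neg]
    rw [show ((round s : ℝ) : UnitAddCircle) = 0 from h0]
    simp
  · rw [UnitAddCircle.norm_eq]

lemma norm_nsmul_small {q : ℕ} (hq : 1 ≤ q) (z : UnitAddCircle)
    (h : ‖z‖ ≤ 1/(2*q)) : ‖q • z‖ = q * ‖z‖ := by
  obtain ⟨t, rfl, ht, ht2⟩ := unit_rep z
  have hq0 : (0:ℝ) < q := by exact_mod_cast hq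
  have hcoe : q • ((t : ℝ) : UnitAddCircle) = ((q * t : ℝ) : UnitAddCircle) := by
    rw [← QuotientAddGroup.mk_nsmul]
    norm_num [nsmul_eq_mul]
  rw [hcoe, ht]
  have habs : |q * t| ≤ 1/2 := by
    rw [abs_mul, Nat.abs_cast]
    calc (q:ℝ) * |t| ≤ q * (1/(2*q)) := by
          apply mul_le_mul_of_nonneg_left _ (le_of_lt hq0)
          rw [← ht]; exact h
      _ = 1/2 := by field_simp
  rw [(AddCircle.norm_coe_eq_abs_iff (p := (1:ℝ)) one_ne_zero).mpr (by simpa using habs)]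
  rw [abs_mul, Nat.abs_cast]

lemma dist_nsmul_small {q : ℕ} (hq : 1 ≤ q) (a b : UnitAddCircle)
    (h : dist a b ≤ 1/(2*q)) : dist (q • a) (q • b) = q * dist a b := by
  rw [dist_eq_norm] at h ⊢
  rw [← smul_sub]
  rw [dist_eq_norm]; exact norm_nsmul_small hq _ h

lemma finite_of_contracting {α : Type*} [MetricSpace α] [CompactSpace α]
    (f : α → α) (hsurj : Function.Surjective f) {δ c : ℝ} (hδ : 0 < δ)
    (hc0 : 0 ≤ c) (hc1 : c < 1)
    (hf : ∀ a b, dist a b < δ → dist (f a) (f b) ≤ c * dist a b) :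
    Finite α := by
  classical
  by_contra hfin
  rw [not_finite_iff_infinite] at hfin
  obtain ⟨t, -, tfin, hcover⟩ :=
    finite_cover_balls_of_compact (isCompact_univ (X := α)) (half_pos hδ)
  have hiter : ∀ n (a b : α), dist a b < δ →
      dist (f^[n] a) (f^[n] b) ≤ c^n * dist a b := by
    intro n
    induction n with
    | zero => intro a b _; simp
    | succ n ih =>
      intro a b hab
      have h1 : dist (f a) (f b) ≤ c * dist a b := hf a b hab
      have h2 : dist (f a) (f b) < δ :=
        lt_of_le_of_lt (h1.trans (by nlinarith [dist_nonneg (x := a) (y := b)])) hab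
      calc dist (f^[n+1] a) (f^[n+1] b) = dist (f^[n] (f a)) (f^[n] (f b)) := by
            simp [Function.iterate_succ_apply]
        _ ≤ c^n * dist (f a) (f b) := ih (f a) (f b) h2
        _ ≤ c^n * (c * dist a b) := by
            apply mul_le_mul_of_nonneg_left h1 (pow_nonneg hc0 n)
        _ = c^(n+1) * dist a b := by ring
  obtain ⟨s, hcard⟩ := Infinite.exists_subset_card_eq α (tfin.toFinset.card + 1)
  -- choose preimages etc.
  have h2le : 2 ≤ s.card := by
    rw [hcard]
    have : tfin.toFinset.card ≠ 0 := by
      intro h0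
      rw [Finset.card_eq_zero] at h0
      have : (Set.univ : Set α).Nonempty := univ_nonempty
      obtain ⟨a, ha⟩ := this
      have := hcover ha
      simp only [mem_iUnion] at this
      obtain ⟨i, hi, -⟩ := this
      rw [← Set.Finite.mem_toFinset tfin, h0] at hi
      exact absurd hi (Finset.notMem_empty i)
    omega
  set P := (s ×ˢ s).filter (fun p => p.1 ≠ p.2) with hP
  have hPne : P.Nonempty := by
    obtain ⟨a, ha, b, hb, hab⟩ := Finset.one_lt_card.mp h2le
    exact ⟨(a, b), by simp [hP, Finset.mem_product, ha, hb, hab]⟩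
  set η := P.inf' hPne (fun p => dist p.1 p.2) with hη
  have hηpos : 0 < η := by
    rw [hη, Finset.lt_inf'_iff]
    rintro ⟨a, b⟩ hab
    simp only [hP, Finset.mem_filter, Finset.mem_product] at hab
    exact dist_pos.mpr hab.2
  obtain ⟨n, hn⟩ := exists_pow_lt_of_lt_one (div_pos hηpos hδ) hc1
  have hcnδ : c^n * δ < η := by
    rw [lt_div_iff₀ hδ] at hn
    linarith [hn]
  -- for each z pick a preimage under f^[n] and a ball center
  have hsurjn : Function.Surjective (f^[n]) := Function.Surjective.iterate hsurj n
  have hpick : ∀ z : α, ∃ a j, j ∈ tfin.toFinset ∧ f^[n] a = z ∧ dist a j < δ/2 := by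
    intro z
    obtain ⟨a, ha⟩ := hsurjn z
    have := hcover (mem_univ a)
    simp only [mem_iUnion] at this
    obtain ⟨j, hj, hjb⟩ := this
    exact ⟨a, j, (Set.Finite.mem_toFinset tfin).mpr hj, ha, mem_ball.mp hjb⟩
  choose ga gj hjmem hga hgj using hpick
  obtain ⟨z, hz, w, hw, hzw, hjeq⟩ :=
    Finset.exists_ne_map_eq_of_card_lt_of_maps_to (s := s) (t := tfin.toFinset)
      (by omega) (fun z _ => hjmem z)
  have hab : dist (ga z) (ga w) < δ := by
    calc dist (ga z) (ga w) ≤ dist (ga z) (gj z) + dist (gj w) (ga w) := by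
          rw [hjeq]; exact dist_triangle _ _ _
      _ < δ/2 + δ/2 := by
          have := hgj z; have := hgj w
          rw [dist_comm (gj w)]; linarith
      _ = δ := by ring
  have hd : dist z w ≤ c^n * dist (ga z) (ga w) := by
    have := hiter n (ga z) (ga w) hab
    rwa [hga z, hga w] at this
  have hlt : dist z w < η := by
    have h1 : c^n * dist (ga z) (ga w) ≤ c^n * δ :=
      mul_le_mul_of_nonneg_left hab.le (pow_nonneg hc0 n)
    linarith
  have hge : η ≤ dist z w := by
    have := Finset.inf'_le (fun p : α × α => dist p.1 p.2)
      (show (z, w) ∈ P by simp [hP, Finset.mem_product, hz, hw, hzw])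
    exact this
  linarith

lemma irrational_no_torsion {x : ℝ} (hx : Irrational x) {m : ℕ} (hm : m ≠ 0)
    (h : m • (x : UnitAddCircle) = 0) : False := by
  have hcoe : m • (x : UnitAddCircle) = ((m * x : ℝ) : UnitAddCircle) := by
    rw [← QuotientAddGroup.mk_nsmul]
    norm_num [nsmul_eq_mul]
  rw [hcoe, AddCircle.coe_eq_zero_iff] at h
  obtain ⟨n, hn⟩ := h
  have hn' : (n : ℝ) = m * x := by simpa using hn
  have hm' : (m : ℝ) ≠ 0 := Nat.cast_ne_zero.mpr hm
  have hxval : x = (n : ℝ) / m := by field_simp; linarith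
  exact hx ⟨(n : ℚ)/(m : ℚ), by push_cast; rw [hxval]⟩

theorem timesQ_not_injective_on_attractor
    (q : ℕ) (hq : 2 ≤ q) (x : ℝ) (hx : Irrational x) :
    ¬ Set.InjOn (fun y : UnitAddCircle => q • y)
      (⋂ i : ℕ, (fun y : UnitAddCircle => q ^ i • y) ''
        closure {y : UnitAddCircle | ∃ m : ℕ, y = q ^ m • (x : UnitAddCircle)}) := by
  intro hinj
  classical
  have hq1 : 1 ≤ q := by omega
  have hq0R : (0:ℝ) < q := by positivity
  have hq1R : (1:ℝ) ≤ q := by exact_mod_cast hq1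
  set p : UnitAddCircle := (x : UnitAddCircle) with hp
  set O : Set UnitAddCircle := closure {y : UnitAddCircle | ∃ m : ℕ, y = q ^ m • p} with hO
  set A : ℕ → Set UnitAddCircle := fun i => (fun y : UnitAddCircle => q ^ i • y) '' O with hA
  set K : Set UnitAddCircle := ⋂ i, A i with hK
  have hcont : ∀ m : ℕ, Continuous (fun y : UnitAddCircle => m • y) := fun m => continuous_nsmul m
  have hOclosed : IsClosed O := isClosed_closure
  have hOcomp : IsCompact O := hOclosed.isCompact
  have hOne : O.Nonempty := ⟨p, subset_closure ⟨0, by simp⟩⟩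
  have hAcomp : ∀ i, IsCompact (A i) := fun i => hOcomp.image (hcont _)
  have hAclosed : ∀ i, IsClosed (A i) := fun i => (hAcomp i).isClosed
  have hAne : ∀ i, (A i).Nonempty := fun i => hOne.image _
  -- T O ⊆ O
  have hTO : (fun y : UnitAddCircle => q • y) '' O ⊆ O := by
    rw [hO]
    refine subset_trans (image_closure_subset_closure_image (hcont q)) (closure_mono ?_)
    rintro _ ⟨y, ⟨m, rfl⟩, rfl⟩
    refine ⟨m + 1, ?_⟩
    show q • (q ^ m • p) = q ^ (m+1) • p
    rw [smul_smul, pow_succ, mul_comm]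
  -- composition identities
  have hcompose : ∀ i : ℕ, ∀ s : Set UnitAddCircle,
      (fun y : UnitAddCircle => q ^ i • y) '' ((fun y : UnitAddCircle => q • y) '' s)
        = (fun y : UnitAddCircle => q ^ (i+1) • y) '' s := by
    intro i s
    have hfun : (fun y : UnitAddCircle => q ^ i • (q • y)) = (fun y => q ^ (i+1) • y) := by
      funext y; rw [smul_smul, ← pow_succ]
    rw [image_image, hfun]
  have hcompose' : ∀ i : ℕ, ∀ s : Set UnitAddCircle,
      (fun y : UnitAddCircle => q • y) '' ((fun y : UnitAddCircle => q ^ i • y) '' s)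
        = (fun y : UnitAddCircle => q ^ (i+1) • y) '' s := by
    intro i s
    have hfun : (fun y : UnitAddCircle => q • (q ^ i • y)) = (fun y => q ^ (i+1) • y) := by
      funext y; rw [smul_smul, ← pow_succ']
    rw [image_image, hfun]
  have hAdec : ∀ i, A (i+1) ⊆ A i := by
    intro i
    rw [hA]
    dsimp only
    rw [← hcompose i O]
    exact image_mono hTO
  have hAanti : ∀ i j, i ≤ j → A j ⊆ A i := by
    intro i j hij
    induction j with
    | zero => simp_all
    | succ j ih =>
      rcases Nat.lt_or_ge i (j+1) with h | h
      · exact (hAdec j).trans (ih (by omega))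
      · have : i = j + 1 := by omega
        subst this; exact subset_rfl
  have hTA : ∀ i, (fun y : UnitAddCircle => q • y) '' A i = A (i+1) := by
    intro i; rw [hA]; exact hcompose' i O
  have hKcomp : IsCompact K := ((hAcomp 0).of_isClosed_subset
    (isClosed_iInter fun i => hAclosed i) (iInter_subset _ 0))
  have hKclosed : IsClosed K := isClosed_iInter fun i => hAclosed i
  have hKne : K.Nonempty := by
    apply IsCompact.nonempty_iInter_of_sequence_nonempty_isCompact_isClosed A hAdec hAne
      (hAcomp 0) hAclosed
  -- T maps K into K
  have hTK_sub : ∀ z ∈ K, (q • z) ∈ K := by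
    intro z hz
    rw [hK, mem_iInter]
    intro i
    have hz' : z ∈ A i := (mem_iInter.mp hz) i
    have : q • z ∈ A (i+1) := by
      rw [← hTA i]; exact ⟨z, hz', rfl⟩
    exact hAdec i this
  -- T is onto K
  have hTK_sup : ∀ z ∈ K, ∃ w ∈ K, q • w = z := by
    intro z hz
    set C : ℕ → Set UnitAddCircle := fun i => A i ∩ {w | q • w = z} with hC
    have hCclosed : ∀ i, IsClosed (C i) :=
      fun i => (hAclosed i).inter (isClosed_singleton.preimage (hcont q))
    have hCne : ∀ i, (C i).Nonempty := by
      intro i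
      have hz' : z ∈ A (i+1) := (mem_iInter.mp hz) (i+1)
      rw [← hTA i] at hz'
      obtain ⟨w, hw, hwz⟩ := hz'
      exact ⟨w, hw, hwz⟩
    have hCdec : ∀ i, C (i+1) ⊆ C i := fun i => inter_subset_inter_left _ (hAdec i)
    obtain ⟨w, hw⟩ := IsCompact.nonempty_iInter_of_sequence_nonempty_isCompact_isClosed C
      hCdec hCne ((hAcomp 0).inter_right (isClosed_singleton.preimage (hcont q))) hCclosed
    rw [mem_iInter] at hw
    refine ⟨w, ?_, (hw 0).2⟩
    rw [hK, mem_iInter]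
    exact fun i => (hw i).1
  -- the bijection on K
  have hKcompSpace : CompactSpace ↥K := isCompact_iff_compactSpace.mp hKcomp
  let f : ↥K → ↥K := fun a => ⟨q • (a : UnitAddCircle), hTK_sub _ a.2⟩
  have hfcont : Continuous f := ((hcont q).comp continuous_subtype_val).subtype_mk _
  have hfbij : Function.Bijective f := by
    constructor
    · intro a b hab
      exact Subtype.ext (hinj a.2 b.2 (congrArg Subtype.val hab))
    · intro z
      obtain ⟨w, hw, hwz⟩ := hTK_sup z z.2
      exact ⟨⟨w, hw⟩, Subtype.ext hwz⟩
  let e : ↥K ≃ ↥K := Equiv.ofBijective f hfbij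
  have hecont : Continuous e := hfcont
  let homeo : ↥K ≃ₜ ↥K := hecont.homeoOfEquivCompactToT2
  have hSuc : UniformContinuous (⇑homeo.symm) :=
    CompactSpace.uniformContinuous_of_continuous homeo.symm.continuous
  obtain ⟨δ, hδpos, hδ⟩ := Metric.uniformContinuous_iff.mp hSuc (1/(2*q)) (by positivity)
  -- K is finite
  have hfinK : Finite ↥K := by
    apply finite_of_contracting (⇑homeo.symm) homeo.symm.surjective hδpos
      (c := ((q:ℝ))⁻¹) (by positivity) ?_ ?_
    · rw [inv_lt_one_iff₀]; right; exact_mod_cast by omega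
    · intro a b hab
      have h1 : dist (homeo.symm a) (homeo.symm b) < 1/(2*q) := hδ hab
      have h2 : dist ((homeo.symm a : UnitAddCircle)) ((homeo.symm b : UnitAddCircle))
          ≤ 1/(2*q) := by rw [← Subtype.dist_eq]; exact h1.le
      have h3 : dist (q • (homeo.symm a : UnitAddCircle)) (q • (homeo.symm b : UnitAddCircle))
          = q * dist ((homeo.symm a : UnitAddCircle)) ((homeo.symm b : UnitAddCircle)) :=
        dist_nsmul_small hq1 _ _ h2
      have h4 : (homeo (homeo.symm a) : UnitAddCircle) = (a : UnitAddCircle) := by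
        rw [Homeomorph.apply_symm_apply]
      have h5 : (homeo (homeo.symm b) : UnitAddCircle) = (b : UnitAddCircle) := by
        rw [Homeomorph.apply_symm_apply]
      have h6 : (homeo (homeo.symm a) : UnitAddCircle) = q • (homeo.symm a : UnitAddCircle) := rfl
      have h7 : (homeo (homeo.symm b) : UnitAddCircle) = q • (homeo.symm b : UnitAddCircle) := rfl
      have h8 : dist a b = q * dist (homeo.symm a) (homeo.symm b) := by
        rw [Subtype.dist_eq, Subtype.dist_eq, ← h4, ← h5, h6, h7, h3]
      rw [h8]
      rw [inv_mul_cancel_left₀ (by positivity)]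
  have hKfin : K.Finite := Set.finite_coe_iff.mp hfinK
  -- periodicity: all points of K are fixed by q^P
  have hpow : ∀ (n : ℕ) (z : ↥K), (((e ^ n) z : ↥K) : UnitAddCircle) = q ^ n • (z : UnitAddCircle) := by
    intro n
    induction n with
    | zero => intro z; simp
    | succ n ih =>
      intro z
      rw [pow_succ, Equiv.Perm.mul_apply]
      have : ((e z : ↥K) : UnitAddCircle) = q • (z : UnitAddCircle) := rfl
      rw [ih (e z), this, smul_smul, ← pow_succ]
  set P := orderOf e with hPdef
  have hPpos : 0 < P := orderOf_pos e
  have hfix : ∀ z ∈ K, q ^ P • z = z := by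
    intro z hz
    have := hpow P ⟨z, hz⟩
    rw [pow_orderOf_eq_one e] at this
    simpa using this.symm
  -- orbit points are not in K
  have horb : ∀ n : ℕ, q ^ n • p ∉ K := by
    intro n hn
    have h1 : q ^ P • (q ^ n • p) = q ^ n • p := hfix _ hn
    rw [smul_smul, ← pow_add] at h1
    have hlt : q ^ n < q ^ (P + n) := by
      apply Nat.pow_lt_pow_right (by omega); omega
    have h2 : (q ^ (P+n) - q ^ n) • p = 0 := by
      have h3 : (q ^ (P+n) - q ^ n) • p + q ^ n • p = q ^ (P+n) • p := by
        rw [← add_nsmul, Nat.sub_add_cancel hlt.le]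
      rw [h1] at h3
      nth_rewrite 2 [← zero_add (q ^ n • p)] at h3
      exact add_right_cancel h3
    exact irrational_no_torsion hx (by omega) h2
  -- separation radius
  obtain ⟨r, hrpos, hr⟩ : ∃ r > 0, ∀ y ∈ K, ∀ z ∈ K, y ≠ z → r ≤ dist y z := by
    set F := hKfin.toFinset with hF
    set Pr := (F ×ˢ F).filter (fun pr => pr.1 ≠ pr.2) with hPr
    by_cases hPe : Pr.Nonempty
    · refine ⟨Pr.inf' hPe (fun pr => dist pr.1 pr.2), ?_, ?_⟩
      · rw [gt_iff_lt, Finset.lt_inf'_iff]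
        rintro ⟨a, b⟩ hab
        simp only [hPr, Finset.mem_filter, Finset.mem_product] at hab
        exact dist_pos.mpr hab.2
      · intro y hy z hz hne
        have hmem : (y, z) ∈ Pr := by
          simp [hPr, Finset.mem_product, hF, Set.Finite.mem_toFinset, hy, hz, hne]
        have := Finset.inf'_le (fun pr : UnitAddCircle × UnitAddCircle => dist pr.1 pr.2) hmem
        exact this
    · refine ⟨1, one_pos, ?_⟩
      intro y hy z hz hne
      exfalso
      apply hPe
      exact ⟨(y, z), by simp [hPr, Finset.mem_product, hF, Set.Finite.mem_toFinset, hy, hz, hne]⟩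
  -- the distance sequence
  set d : ℕ → ℝ := fun n => infDist (q ^ n • p) K with hd
  have hdpos : ∀ n, 0 < d n := by
    intro n
    exact (hKclosed.notMem_iff_infDist_pos hKne).mp (horb n)
  -- d n → 0
  have hsmall : ∀ ε > 0, ∃ N : ℕ, ∀ n ≥ N, d n < ε := by
    intro ε hε
    have hUopen : IsOpen {y : UnitAddCircle | infDist y K < ε} :=
      isOpen_lt (continuous_infDist_pt K) continuous_const
    have hKU : K ⊆ {y : UnitAddCircle | infDist y K < ε} := by
      intro y hy
      simpa [infDist_zero_of_mem hy] using hε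
    have hex : ∃ i, A i ⊆ {y : UnitAddCircle | infDist y K < ε} := by
      by_contra hno
      push_neg at hno
      have hne' : ∀ i, (A i ∩ {y : UnitAddCircle | infDist y K < ε}ᶜ).Nonempty := by
        intro i
        obtain ⟨y, hy1, hy2⟩ := Set.not_subset.mp (hno i)
        exact ⟨y, hy1, hy2⟩
      obtain ⟨y, hy⟩ := IsCompact.nonempty_iInter_of_sequence_nonempty_isCompact_isClosed
        (fun i => A i ∩ {y : UnitAddCircle | infDist y K < ε}ᶜ)
        (fun i => inter_subset_inter_left _ (hAdec i)) hne'
        ((hAcomp 0).inter_right hUopen.isClosed_compl)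
        (fun i => (hAclosed i).inter hUopen.isClosed_compl)
      rw [mem_iInter] at hy
      have hyK : y ∈ K := by
        rw [hK, mem_iInter]; exact fun i => (hy i).1
      exact (hy 0).2 (hKU hyK)
    obtain ⟨i, hi⟩ := hex
    refine ⟨i, fun n hn => ?_⟩
    apply hi
    rw [hA]
    refine ⟨q ^ (n - i) • p, subset_closure ⟨n - i, rfl⟩, ?_⟩
    dsimp only
    rw [smul_smul, ← pow_add]
    congr 2
    omega
  -- the step identity
  have hstep : ∀ n, d n < min (1/(2*(q:ℝ))) (r/(2*(q:ℝ))) → d (n+1) = q * d n := by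
    intro n hn
    obtain ⟨y, hyK, hy⟩ := hKcomp.exists_infDist_eq_dist hKne (q ^ n • p)
    have hdn : d n = dist (q ^ n • p) y := hy
    have hstep1 : dist (q ^ (n+1) • p) (q • y) = q * d n := by
      have : q ^ (n+1) • p = q • (q ^ n • p) := by rw [smul_smul, ← pow_succ']
      rw [this, dist_nsmul_small hq1 _ _ (by rw [← hdn]; exact hn.le.trans (min_le_left _ _)), hdn]
    have hqy : q • y ∈ K := hTK_sub y hyK
    have hub : d (n+1) ≤ q * d n := by
      rw [← hstep1]; exact infDist_le_dist_of_mem hqy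
    have hqd : q * d n < r / 2 := by
      have h1 : d n < r/(2*q) := lt_of_lt_of_le hn (min_le_right _ _)
      calc (q:ℝ) * d n < q * (r/(2*q)) := by
            apply mul_lt_mul_of_pos_left h1 hq0R
        _ = r/2 := by field_simp
    obtain ⟨z, hzK, hz⟩ := hKcomp.exists_infDist_eq_dist hKne (q ^ (n+1) • p)
    have hdz : d (n+1) = dist (q ^ (n+1) • p) z := hz
    have hzy : z = q • y := by
      by_contra hne
      have h1 : r ≤ dist z (q • y) := hr z hzK _ hqy hne
      have h2 : dist z (q • y) ≤ dist (q ^ (n+1) • p) z + dist (q ^ (n+1) • p) (q • y) := by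
        rw [dist_comm (q ^ (n+1) • p) z]; exact dist_triangle _ _ _
      rw [← hdz, hstep1] at h2
      have h3 : d (n+1) < r/2 := lt_of_le_of_lt hub hqd
      linarith
    rw [hdz, hzy, hstep1]
  -- final contradiction
  set ε := min (1/(2*(q:ℝ))) (r/(2*q)) with hε
  have hεpos : 0 < ε := lt_min (by positivity) (by positivity)
  obtain ⟨N, hN⟩ := hsmall ε hεpos
  have hmono : ∀ n ≥ N, d N ≤ d n := by
    intro n hn
    induction n with
    | zero =>
      have : N = 0 := by omega
      simp [this]
    | succ n ih =>
      rcases Nat.lt_or_ge N (n+1) with h | h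
      · have hNn : N ≤ n := by omega
        have h1 := ih hNn
        have h2 : d (n+1) = q * d n := hstep n (hN n hNn)
        have h3 : d n ≤ q * d n := le_mul_of_one_le_left (hdpos n).le hq1R
        linarith
      · have : N = n + 1 := by omega
        simp [this]
  obtain ⟨N', hN'⟩ := hsmall (d N) (hdpos N)
  have h1 := hmono (max N N') (le_max_left _ _)
  have h2 := hN' (max N N') (le_max_right _ _)
  linarith
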